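/- Let 0 < α < 1 and let f ∈ C¹((0,T)) ∩ C([0,T]) be such that its Caputo fractional derivative of order α is defined at t₀, where t₀ ∈ (0,T] is a point at which f attains its maximum over the interval [0,T]. Then ∂^α_{+0,t} f(t₀) ≥ 0. -/

import Mathlib

open Set MeasureTheory Filter
open scoped Topology

/-- Caputo fractional derivative of order `α` at base point `0`. -/
noncomputable def caputo (α : ℝ) (f : ℝ → ℝ) (t : ℝ) : ℝ :=
  (1 / Real.Gamma (1 - α)) * ∫ s in (0:ℝ)..t, (t - s) ^ (-α) * deriv f s

/-- Caputo derivative at a maximum point is nonnegative. -/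
theorem caputo_nonneg_at_max (α T t₀ : ℝ) (hα : 0 < α ∧ α < 1) (hT : 0 < T) (f : ℝ → ℝ)
    (hc : ContinuousOn f (Set.Icc 0 T))
    (hd : ∀ t ∈ Set.Ioo (0:ℝ) T, DifferentiableAt ℝ f t)
    (hd' : ContinuousOn (deriv f) (Set.Ioo 0 T))
    (ht₀ : t₀ ∈ Set.Ioc (0:ℝ) T)
    (hint : IntervalIntegrable (fun s => (t₀ - s) ^ (-α) * deriv f s) MeasureTheory.volume 0 t₀)
    (hmax : ∀ t ∈ Set.Icc (0:ℝ) T, f t ≤ f t₀) :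
    0 ≤ caputo α f t₀ := by
  obtain ⟨hα0, hα1⟩ := hα
  obtain ⟨ht0, htT⟩ := ht₀
  have hΓ : 0 < Real.Gamma (1 - α) := Real.Gamma_pos_of_pos (by linarith)
  suffices hI : 0 ≤ ∫ s in (0:ℝ)..t₀, (t₀ - s) ^ (-α) * deriv f s by
    exact mul_nonneg (le_of_lt (by positivity)) hI
  by_contra hneg
  push_neg at hneg
  set P : ℝ → ℝ := fun x => ∫ s in (0:ℝ)..x, (t₀ - s) ^ (-α) * deriv f s with hPdef
  set D : ℝ → ℝ := fun x => (t₀ - x) ^ (-α) * (f t₀ - f x) + P x with hDdef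
  -- basic facts
  have hfs : ∀ s, 0 ≤ s → s ≤ t₀ → f s ≤ f t₀ := fun s h1 h2 => hmax s ⟨h1, le_trans h2 htT⟩
  have hwpos : ∀ {s : ℝ}, s < t₀ → (0:ℝ) < t₀ - s := fun h => by linarith
  -- derivative of the weight
  have hw : ∀ {x : ℝ}, x < t₀ →
      HasDerivAt (fun s => (t₀ - s) ^ (-α)) (α * (t₀ - x) ^ (-α - 1)) x := by
    intro x hx
    have h1 : HasDerivAt (fun s : ℝ => t₀ - s) (-1) x := (hasDerivAt_id x).const_sub t₀
    have h2 := h1.rpow_const (p := -α) (Or.inl (ne_of_gt (hwpos hx)))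
    convert h2 using 1
    ring
  have hfd : ∀ {x : ℝ}, 0 < x → x < t₀ → HasDerivAt f (deriv f x) x := fun hx1 hx2 =>
    (hd _ ⟨hx1, lt_of_lt_of_le hx2 htT⟩).hasDerivAt
  have hintsub : ∀ {a b : ℝ}, 0 ≤ a → b ≤ t₀ → a ≤ b →
      IntervalIntegrable (fun s => (t₀ - s) ^ (-α) * deriv f s) volume a b := by
    intro a b ha hb hab
    apply hint.mono_set
    rw [Set.uIcc_of_le hab, Set.uIcc_of_le ht0.le]
    exact Icc_subset_Icc ha hb
  have hcontf : ∀ {a b : ℝ}, 0 ≤ a → b ≤ t₀ → ContinuousOn f (Icc a b) :=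
    fun ha hb => hc.mono (Icc_subset_Icc ha (le_trans hb htT))
  have hcontw' : ∀ {a b : ℝ}, b < t₀ →
      ContinuousOn (fun s => α * (t₀ - s) ^ (-α - 1)) (Icc a b) := by
    intro a b hb
    apply ContinuousOn.mul continuousOn_const
    apply ContinuousOn.rpow_const
    · exact (continuous_const.sub continuous_id).continuousOn
    · intro x hx; exact Or.inl (ne_of_gt (hwpos (lt_of_le_of_lt hx.2 hb)))
  -- the key identity : D b = D a + ∫_a^b α (t₀-s)^(-α-1) (f t₀ - f s)
  have hKey : ∀ {a b : ℝ}, 0 < a → a ≤ b → b < t₀ →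
      D b = D a + ∫ s in a..b, α * (t₀ - s) ^ (-α - 1) * (f t₀ - f s) := by
    intro a b ha hab hb
    have ha' : a ≤ t₀ := le_of_lt (lt_of_le_of_lt hab hb)
    have hPab : P a + (∫ s in a..b, (t₀ - s) ^ (-α) * deriv f s) = P b :=
      intervalIntegral.integral_add_adjacent_intervals
        (hintsub le_rfl ha' ha.le) (hintsub ha.le hb.le hab)
    have hw'int : IntervalIntegrable (fun s => α * (t₀ - s) ^ (-α - 1)) volume a b := by
      have := (hcontw' (a := a) (b := b) hb)
      rw [← Set.uIcc_of_le hab] at this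
      exact this.intervalIntegrable
    have hw'fint : IntervalIntegrable (fun s => α * (t₀ - s) ^ (-α - 1) * f s) volume a b := by
      have : ContinuousOn (fun s => α * (t₀ - s) ^ (-α - 1) * f s) (Icc a b) :=
        (hcontw' hb).mul (hcontf ha.le hb.le)
      rw [← Set.uIcc_of_le hab] at this
      exact this.intervalIntegrable
    have hw'cint : IntervalIntegrable (fun s => α * (t₀ - s) ^ (-α - 1) * f t₀) volume a b :=
      hw'int.mul_const _
    have hIBP : ∫ s in a..b, (t₀ - s) ^ (-α) * deriv f s
        = (t₀ - b) ^ (-α) * f b - (t₀ - a) ^ (-α) * f a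
          - ∫ s in a..b, α * (t₀ - s) ^ (-α - 1) * f s := by
      apply intervalIntegral.integral_mul_deriv_eq_deriv_mul
      · intro x hx
        rw [Set.uIcc_of_le hab] at hx
        exact hw (lt_of_le_of_lt hx.2 hb)
      · intro x hx
        rw [Set.uIcc_of_le hab] at hx
        exact hfd (lt_of_lt_of_le ha hx.1) (lt_of_le_of_lt hx.2 hb)
      · exact hw'int
      · have : ContinuousOn (deriv f) (Icc a b) :=
          hd'.mono (fun x hx => ⟨lt_of_lt_of_le ha hx.1, lt_of_le_of_lt hx.2 (lt_of_lt_of_le hb htT)⟩)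
        rw [← Set.uIcc_of_le hab] at this
        exact this.intervalIntegrable
    have hFTC : ∫ s in a..b, α * (t₀ - s) ^ (-α - 1)
        = (t₀ - b) ^ (-α) - (t₀ - a) ^ (-α) := by
      apply intervalIntegral.integral_eq_sub_of_hasDerivAt
      · intro x hx
        rw [Set.uIcc_of_le hab] at hx
        exact hw (lt_of_le_of_lt hx.2 hb)
      · exact hw'int
    have hsplit : ∫ s in a..b, α * (t₀ - s) ^ (-α - 1) * (f t₀ - f s)
        = (∫ s in a..b, α * (t₀ - s) ^ (-α - 1)) * f t₀
          - ∫ s in a..b, α * (t₀ - s) ^ (-α - 1) * f s := by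
      rw [← intervalIntegral.integral_mul_const, ← intervalIntegral.integral_sub hw'cint hw'fint]
      congr 1
      ext s
      ring
    rw [hDdef]
    simp only
    rw [hsplit, hFTC]
    linear_combination hIBP - hPab
  -- monotonicity of D
  have hmono : ∀ {a b : ℝ}, 0 < a → a ≤ b → b < t₀ → D a ≤ D b := by
    intro a b ha hab hb
    rw [hKey ha hab hb]
    have : 0 ≤ ∫ s in a..b, α * (t₀ - s) ^ (-α - 1) * (f t₀ - f s) := by
      apply intervalIntegral.integral_nonneg hab
      intro s hs
      have h1 : 0 ≤ (t₀ - s) ^ (-α - 1) :=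
        Real.rpow_nonneg (le_of_lt (hwpos (lt_of_le_of_lt hs.2 hb))) _
      have h2 : f s ≤ f t₀ := hfs s (le_trans ha.le hs.1) (le_of_lt (lt_of_le_of_lt hs.2 hb))
      have := mul_nonneg (mul_nonneg hα0.le h1) (sub_nonneg.2 h2)
      linarith [this]
    linarith
  -- continuity of the primitive P
  have hPcont : ContinuousOn P (Icc 0 t₀) := by
    have h0 : (0:ℝ) ∈ Set.uIcc (0:ℝ) t₀ := Set.left_mem_uIcc
    have := intervalIntegral.continuousOn_primitive_interval' hint h0
    rwa [Set.uIcc_of_le ht0.le] at this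
  -- filter inequalities
  have hle0 : 𝓝[>] (0:ℝ) ≤ 𝓝[Icc 0 t₀] 0 := by
    rw [← nhdsWithin_Ioc_eq_nhdsGT ht0]
    exact nhdsWithin_mono _ Ioc_subset_Icc_self
  -- limit of D at 0⁺ and nonnegativity of D
  have hD0 : Tendsto D (𝓝[>] (0:ℝ)) (𝓝 (t₀ ^ (-α) * (f t₀ - f 0))) := by
    have h1 : ContinuousAt (fun x : ℝ => (t₀ - x) ^ (-α)) 0 := by
      have h2 : ContinuousAt (fun y : ℝ => y ^ (-α)) (t₀ - 0) :=
        Real.continuousAt_rpow_const _ _ (Or.inl (by simp; linarith))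
      exact h2.comp ((continuous_const.sub continuous_id).continuousAt)
    have hf0 : Tendsto f (𝓝[>] (0:ℝ)) (𝓝 (f 0)) := by
      have := (hc 0 ⟨le_rfl, hT.le⟩).tendsto
      exact this.mono_left (le_trans hle0 (nhdsWithin_mono _ (Icc_subset_Icc le_rfl htT)))
    have hP0 : Tendsto P (𝓝[>] (0:ℝ)) (𝓝 (P 0)) :=
      ((hPcont 0 ⟨le_rfl, ht0.le⟩).tendsto).mono_left hle0
    have hP00 : P 0 = 0 := intervalIntegral.integral_same
    have h3 : Tendsto (fun x => (t₀ - x) ^ (-α)) (𝓝[>] (0:ℝ)) (𝓝 (t₀ ^ (-α))) := by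
      have := h1.tendsto.mono_left (nhdsWithin_le_nhds (s := Ioi (0:ℝ)))
      simpa using this
    have := (h3.mul ((tendsto_const_nhds (x := f t₀)).sub hf0)).add hP0
    rw [hP00] at this
    simpa using this
  have hDpos : ∀ x, 0 < x → x < t₀ → 0 ≤ D x := by
    intro x hx1 hx2
    have hlim : 0 ≤ t₀ ^ (-α) * (f t₀ - f 0) :=
      mul_nonneg (Real.rpow_nonneg ht0.le _) (sub_nonneg.2 (hfs 0 le_rfl ht0.le))
    refine le_trans hlim (le_of_tendsto hD0 ?_)
    filter_upwards [Ioc_mem_nhdsGT hx1] with a ha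
    exact hmono ha.1 ha.2 hx2
  -- limit of P ∘ (t₀ - ·) at 0⁺
  have hmap : Tendsto (fun u : ℝ => t₀ - u) (𝓝[>] (0:ℝ)) (𝓝[Icc 0 t₀] t₀) := by
    rw [tendsto_nhdsWithin_iff]
    constructor
    · have h4 : Tendsto (fun u : ℝ => t₀ - u) (𝓝 (0:ℝ)) (𝓝 (t₀ - 0)) :=
        ((continuous_const.sub continuous_id).tendsto 0)
      simpa using h4.mono_left (nhdsWithin_le_nhds (s := Ioi (0:ℝ)))
    · filter_upwards [Ioc_mem_nhdsGT ht0] with u hu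
      exact ⟨by linarith [hu.2], by linarith [hu.1]⟩
  have hPt : Tendsto (fun u => P (t₀ - u)) (𝓝[>] (0:ℝ)) (𝓝 (P t₀)) :=
    ((hPcont t₀ ⟨ht0.le, le_rfl⟩).tendsto).comp hmap
  -- choice of δ
  have hev : ∀ᶠ u in 𝓝[>] (0:ℝ), P (t₀ - u) < P t₀ / 2 :=
    hPt.eventually_lt_const (by linarith)
  obtain ⟨δ₁, hδ₁, hδsub⟩ := mem_nhdsGT_iff_exists_Ioc_subset.mp hev
  set δ : ℝ := min δ₁ (t₀ / 2) with hδdef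
  have hδ0 : 0 < δ := lt_min hδ₁ (by linarith)
  have hδt : δ < t₀ := lt_of_le_of_lt (min_le_right _ _) (by linarith)
  have hPsmall : ∀ u, 0 < u → u ≤ δ → P (t₀ - u) < P t₀ / 2 := fun u h1 h2 =>
    hδsub ⟨h1, le_trans h2 (min_le_left _ _)⟩
  set ℓ : ℝ := -(P t₀) / 2 with hℓdef
  have hℓpos : 0 < ℓ := by rw [hℓdef]; linarith
  set A : ℝ → ℝ := fun u => ∫ s in (t₀ - δ)..(t₀ - u),
      α * (t₀ - s) ^ (-α - 1) * (f t₀ - f s) with hAdef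
  -- key pointwise inequality
  have hstar : ∀ u, 0 < u → u ≤ δ → ℓ + A u ≤ u ^ (-α) * (f t₀ - f (t₀ - u)) := by
    intro u h1 h2
    have hb : t₀ - u < t₀ := by linarith
    have ha : 0 < t₀ - δ := by linarith
    have hab : t₀ - δ ≤ t₀ - u := by linarith
    have hkey := hKey ha hab hb
    have hDd := hDpos (t₀ - δ) ha (by linarith)
    have hP' := hPsmall u h1 h2
    rw [hDdef] at hkey hDd
    simp only [sub_sub_cancel] at hkey
    have hA : A u = ∫ s in (t₀ - δ)..(t₀ - u),
        α * (t₀ - s) ^ (-α - 1) * (f t₀ - f s) := by rw [hAdef]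
    rw [← hA] at hkey
    have hDd' : 0 ≤ δ ^ (-α) * (f t₀ - f (t₀ - δ)) + P (t₀ - δ) := by
      simpa [sub_sub_cancel] using hDd
    rw [hℓdef]
    linarith [hkey, hDd', hP']
  -- continuity of the integrand on the open interval
  have hcontIoo : ContinuousOn (fun s => α * (t₀ - s) ^ (-α - 1) * (f t₀ - f s)) (Ioo 0 t₀) := by
    apply ContinuousOn.mul
    · apply ContinuousOn.mul continuousOn_const
      apply ContinuousOn.rpow_const
      · exact (continuous_const.sub continuous_id).continuousOn
      · intro x hx; exact Or.inl (ne_of_gt (hwpos hx.2))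
    · intro x hx
      have : ContinuousAt f x := (hd x ⟨hx.1, lt_of_lt_of_le hx.2 htT⟩).continuousAt
      exact (continuousAt_const.sub this).continuousWithinAt
  have hopen : IsOpen (Ioo (0:ℝ) t₀) := isOpen_Ioo
  -- derivative of A
  have hA' : ∀ u, 0 < u → u ≤ δ →
      HasDerivAt A (-(α * u ^ (-α - 1) * (f t₀ - f (t₀ - u)))) u := by
    intro u h1 h2
    have hx1 : t₀ - u ∈ Ioo (0:ℝ) t₀ := ⟨by linarith, by linarith⟩
    have hxa : 0 < t₀ - δ := by linarith
    have hi : IntervalIntegrable (fun s => α * (t₀ - s) ^ (-α - 1) * (f t₀ - f s))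
        volume (t₀ - δ) (t₀ - u) := by
      have hIccsub : Set.uIcc (t₀ - δ) (t₀ - u) ⊆ Ioo (0:ℝ) t₀ := by
        rw [Set.uIcc_of_le (by linarith : t₀ - δ ≤ t₀ - u)]
        intro x hx
        exact ⟨lt_of_lt_of_le hxa hx.1, lt_of_le_of_lt hx.2 (by linarith)⟩
      exact (hcontIoo.mono hIccsub).intervalIntegrable
    have hca : ContinuousAt (fun s => α * (t₀ - s) ^ (-α - 1) * (f t₀ - f s)) (t₀ - u) :=
      hcontIoo.continuousAt (hopen.mem_nhds hx1)
    have h3 : HasDerivAt (fun x => ∫ s in (t₀ - δ)..x, α * (t₀ - s) ^ (-α - 1) * (f t₀ - f s))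
        (α * (t₀ - (t₀ - u)) ^ (-α - 1) * (f t₀ - f (t₀ - u))) (t₀ - u) :=
      intervalIntegral.integral_hasDerivAt_right hi
        (ContinuousOn.stronglyMeasurableAtFilter hopen hcontIoo (t₀ - u) hx1) hca
    have h4 : HasDerivAt (fun w : ℝ => t₀ - w) (-1) u := (hasDerivAt_id u).const_sub t₀
    have h5 := h3.comp u h4
    rw [sub_sub_cancel] at h5
    have h6 : HasDerivAt A ((α * u ^ (-α - 1) * (f t₀ - f (t₀ - u))) * (-1)) u := h5
    convert h6 using 1
    ring
  -- the Gronwall function φ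
  set φ : ℝ → ℝ := fun u => u ^ α * (ℓ + A u) with hφdef
  have hφ' : ∀ u, 0 < u → u ≤ δ →
      HasDerivAt φ (α * u ^ (α - 1) * (ℓ + A u)
        - u ^ α * (α * u ^ (-α - 1) * (f t₀ - f (t₀ - u)))) u := by
    intro u h1 h2
    have h5 : HasDerivAt (fun w : ℝ => w ^ α) (α * u ^ (α - 1)) u := by
      simpa using Real.hasDerivAt_rpow_const (x := u) (p := α) (Or.inl (ne_of_gt h1))
    have h6 : HasDerivAt (fun w => w ^ α * (ℓ + A w))
        (α * u ^ (α - 1) * (ℓ + A u) + u ^ α * -(α * u ^ (-α - 1) * (f t₀ - f (t₀ - u)))) u :=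
      h5.mul ((hA' u h1 h2).const_add ℓ)
    convert h6 using 1
    ring
  have hφle : ∀ u ∈ Ioo (0:ℝ) δ, deriv φ u ≤ 0 := by
    intro u hu
    rw [(hφ' u hu.1 hu.2.le).deriv]
    have h9 := hstar u hu.1 hu.2.le
    have h7 : 0 ≤ α * u ^ (α - 1) :=
      mul_nonneg hα0.le (Real.rpow_nonneg hu.1.le _)
    have h10 := mul_le_mul_of_nonneg_left h9 h7
    have e1 : u ^ α * u ^ (-α - 1) = u ^ (α - 1) * u ^ (-α) := by
      rw [← Real.rpow_add hu.1, ← Real.rpow_add hu.1]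
      ring_nf
    have e2 : u ^ α * (α * u ^ (-α - 1) * (f t₀ - f (t₀ - u)))
        = α * u ^ (α - 1) * (u ^ (-α) * (f t₀ - f (t₀ - u))) := by
      linear_combination α * (f t₀ - f (t₀ - u)) * e1
    rw [e2]
    linarith
  have hanti : AntitoneOn φ (Ioc 0 δ) := by
    apply antitoneOn_of_deriv_nonpos (convex_Ioc 0 δ)
    · exact fun u hu => ((hφ' u hu.1 hu.2).differentiableAt.continuousAt).continuousWithinAt
    · rw [interior_Ioc]
      exact fun u hu => ((hφ' u hu.1 hu.2.le).differentiableAt).differentiableWithinAt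
    · rw [interior_Ioc]
      exact hφle
  have hφδ : φ δ = δ ^ α * ℓ := by
    have hA0 : A δ = 0 := by
      rw [hAdef]
      exact intervalIntegral.integral_same
    rw [hφdef]
    simp [hA0]
  have hlow : ∀ u, 0 < u → u ≤ δ → δ ^ α * ℓ ≤ f t₀ - f (t₀ - u) := by
    intro u h1 h2
    have h8 : φ δ ≤ φ u := hanti ⟨h1, h2⟩ ⟨hδ0, le_rfl⟩ h2
    have h9 := hstar u h1 h2
    have h10 : u ^ α * (ℓ + A u) ≤ u ^ α * (u ^ (-α) * (f t₀ - f (t₀ - u))) :=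
      mul_le_mul_of_nonneg_left h9 (Real.rpow_nonneg h1.le α)
    have h11 : u ^ α * u ^ (-α) = 1 := by
      rw [← Real.rpow_add h1]
      simp
    rw [← mul_assoc, h11, one_mul] at h10
    calc δ ^ α * ℓ = φ δ := hφδ.symm
      _ ≤ φ u := h8
      _ = u ^ α * (ℓ + A u) := by rw [hφdef]
      _ ≤ _ := h10
  -- final contradiction with continuity of f at t₀
  have hft : Tendsto (fun u => f (t₀ - u)) (𝓝[>] (0:ℝ)) (𝓝 (f t₀)) := by
    have hcw : ContinuousWithinAt f (Icc 0 t₀) t₀ :=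
      (hc t₀ ⟨ht0.le, htT⟩).mono (Icc_subset_Icc le_rfl htT)
    exact hcw.tendsto.comp hmap
  have hgt : Tendsto (fun u => f t₀ - f (t₀ - u)) (𝓝[>] (0:ℝ)) (𝓝 0) := by
    simpa using (tendsto_const_nhds (x := f t₀)).sub hft
  have hfin : δ ^ α * ℓ ≤ 0 := by
    apply ge_of_tendsto hgt
    filter_upwards [Ioc_mem_nhdsGT hδ0] with u hu
    exact hlow u hu.1 hu.2
  have : 0 < δ ^ α * ℓ := mul_pos (Real.rpow_pos_of_pos hδ0 α) hℓpos
  linarith
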